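/- If an estimator X(v) satisfies E[X(v)] = π'(v) with 0 ≤ X(v) ≤ (1-α)^{i'} per sample, and n_r = ⌈3200(1-α)^{i'} ln(40n)/ε⌉ independent samples are averaged to form π̃(v), then for each v with π'(v) ≥ ε/2, Pr{|π̃(v) − π'(v)| ≥ π'(v)/20} ≤ 1/(20n), and for each v with π'(v) < ε/2, Pr{|π̃(v) − π'(v)| ≥ ε/20} ≤ 1/(20n). -/

import Mathlib

open MeasureTheory

section Aux
open ProbabilityTheory

lemma mc_exp_s_bound : Real.exp (1/20) - 1 - 1/20 ≤ 23/18000 := by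
  have h := Real.exp_bound (x := 1/20) (by rw [abs_of_nonneg] <;> norm_num) (n := 3) (by norm_num)
  have h' := (abs_le.1 h).2
  norm_num [Finset.sum_range_succ, Nat.factorial] at h'
  norm_num at h' ⊢
  linarith

lemma mc_exp_neg_s_bound : Real.exp (-(1/20)) - 1 + 1/20 ≤ 23/18000 := by
  have h := Real.exp_bound (x := -(1/20)) (by rw [abs_of_nonpos] <;> norm_num) (n := 3) (by norm_num)
  have h' := (abs_le.1 h).2
  norm_num [Finset.sum_range_succ, Nat.factorial] at h'
  norm_num at h' ⊢
  linarith

lemma mc_integrable_of_bdd {Ω : Type*} {m0 : MeasurableSpace Ω} (P : Measure Ω)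
    [IsProbabilityMeasure P] {f : Ω → ℝ} {C : ℝ} (hf : Measurable f)
    (h : ∀ ω, |f ω| ≤ C) : Integrable f P :=
  (integrable_const C).mono' hf.aestronglyMeasurable (ae_of_all _ h)

lemma mc_mgf_le_of_bdd {Ω : Type*} {m0 : MeasurableSpace Ω} (P : Measure Ω)
    [IsProbabilityMeasure P] {Y : Ω → ℝ} {r t : ℝ} (hr : 0 < r)
    (hY : Measurable Y) (hb : ∀ ω, 0 ≤ Y ω ∧ Y ω ≤ r) :
    mgf Y P t ≤ Real.exp ((∫ ω, Y ω ∂P) / r * (Real.exp (t * r) - 1)) := by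
  have hYint : Integrable Y P :=
    mc_integrable_of_bdd P hY fun ω => abs_le.2 ⟨by linarith [(hb ω).1], (hb ω).2⟩
  have hpt : ∀ ω, Real.exp (t * Y ω) ≤ 1 + Y ω / r * (Real.exp (t * r) - 1) := by
    intro ω
    have h0 : 0 ≤ Y ω / r := div_nonneg (hb ω).1 hr.le
    have h1 : Y ω / r ≤ 1 := (div_le_one hr).2 (hb ω).2
    have hcx := convexOn_exp.2 (Set.mem_univ (0:ℝ)) (Set.mem_univ (t*r))
      (by linarith : (0:ℝ) ≤ 1 - Y ω / r) h0 (by ring)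
    simp only [smul_eq_mul, mul_zero, zero_add, Real.exp_zero, mul_one] at hcx
    have heq : Y ω / r * (t * r) = t * Y ω := by field_simp
    rw [heq] at hcx
    nlinarith [hcx]
  have hg : Integrable (fun ω => 1 + Y ω / r * (Real.exp (t*r) - 1)) P :=
    (integrable_const 1).add ((hYint.div_const r).mul_const _)
  have hexpint : Integrable (fun ω => Real.exp (t * Y ω)) P := by
    refine mc_integrable_of_bdd (C := Real.exp (|t| * r)) P ((hY.const_mul t).exp) fun ω => ?_
    rw [abs_of_nonneg (Real.exp_pos _).le]
    apply Real.exp_le_exp.2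
    calc t * Y ω ≤ |t| * Y ω := mul_le_mul_of_nonneg_right (le_abs_self t) (hb ω).1
      _ ≤ |t| * r := mul_le_mul_of_nonneg_left (hb ω).2 (abs_nonneg t)
  calc mgf Y P t = ∫ ω, Real.exp (t * Y ω) ∂P := rfl
    _ ≤ ∫ ω, (1 + Y ω / r * (Real.exp (t*r) - 1)) ∂P := integral_mono hexpint hg hpt
    _ = 1 + (∫ ω, Y ω ∂P) / r * (Real.exp (t*r) - 1) := by
        rw [integral_add (integrable_const 1) ((hYint.div_const r).mul_const _), integral_const]
        simp [integral_mul_const, integral_div]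
    _ ≤ Real.exp ((∫ ω, Y ω ∂P) / r * (Real.exp (t * r) - 1)) := by
        linarith [Real.add_one_le_exp ((∫ ω, Y ω ∂P) / r * (Real.exp (t*r) - 1))]

lemma mc_bernstein_tail {Ω : Type*} {m0 : MeasurableSpace Ω} (P : Measure Ω)
    [IsProbabilityMeasure P] {k : ℕ} {r πp lam L : ℝ}
    (hr : 0 < r) (hk : 0 < k)
    (X : Fin k → Ω → ℝ) (hmeas : ∀ i, Measurable (X i))
    (hindep : iIndepFun X P)
    (hbdd : ∀ i ω, 0 ≤ X i ω ∧ X i ω ≤ r)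
    (hmean : ∀ i, (∫ ω, X i ω ∂P) = πp)
    (hπ0 : 0 ≤ πp)
    (hkey : L ≤ ((k:ℝ)/r) * (lam/20 - πp * (23/18000))) :
    P {ω | lam ≤ |(∑ i, X i ω) / (k : ℝ) - πp|} ≤ ENNReal.ofReal (2 * Real.exp (-L)) := by
  have hkR : (0:ℝ) < k := Nat.cast_pos.2 hk
  set F : Ω → ℝ := ∑ i, X i with hF
  have hFapp : ∀ ω, F ω = ∑ i, X i ω := fun ω => by simp [hF]
  have hFmeas : Measurable F := by
    have h := Finset.measurable_sum (f := X) Finset.univ (fun i _ => hmeas i)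
    rwa [show (fun a => ∑ i, X i a) = F from funext fun ω => (hFapp ω).symm] at h
  have hFbdd : ∀ ω, 0 ≤ F ω ∧ F ω ≤ (k:ℝ) * r := by
    intro ω
    rw [hFapp]
    constructor
    · exact Finset.sum_nonneg fun i _ => (hbdd i ω).1
    · calc ∑ i, X i ω ≤ ∑ _i : Fin k, r := Finset.sum_le_sum fun i _ => (hbdd i ω).2
        _ = (k:ℝ) * r := by simp [Finset.sum_const, nsmul_eq_mul]
  have hint : ∀ u : ℝ, Integrable (fun ω => Real.exp (u * F ω)) P := by
    intro u
    refine mc_integrable_of_bdd (C := Real.exp (|u| * ((k:ℝ)*r))) P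
      ((hFmeas.const_mul u).exp) fun ω => ?_
    rw [abs_of_nonneg (Real.exp_pos _).le]
    apply Real.exp_le_exp.2
    calc u * F ω ≤ |u| * F ω := mul_le_mul_of_nonneg_right (le_abs_self u) (hFbdd ω).1
      _ ≤ |u| * ((k:ℝ)*r) := mul_le_mul_of_nonneg_left (hFbdd ω).2 (abs_nonneg u)
  have hmgf : ∀ u : ℝ, mgf F P u ≤ Real.exp ((k:ℝ) * (πp / r * (Real.exp (u*r) - 1))) := by
    intro u
    rw [hF, hindep.mgf_sum hmeas Finset.univ]
    calc ∏ i, mgf (X i) P u ≤ ∏ _i : Fin k, Real.exp (πp / r * (Real.exp (u*r) - 1)) := by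
          refine Finset.prod_le_prod (fun i _ => mgf_nonneg) (fun i _ => ?_)
          have := mc_mgf_le_of_bdd P (t := u) hr (hmeas i) (hbdd i)
          rwa [hmean i] at this
      _ = Real.exp ((k:ℝ) * (πp / r * (Real.exp (u*r) - 1))) := by
          rw [Finset.prod_const, ← Real.exp_nat_mul]; simp
  have hA : (P {ω | (k:ℝ)*(πp+lam) ≤ F ω}).toReal ≤ Real.exp (-L) := by
    have h1 := measure_ge_le_exp_mul_mgf (μ := P) (X := F) (t := (1/20)/r)
      ((k:ℝ)*(πp+lam)) (by positivity) (hint _)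
    refine h1.trans ?_
    calc Real.exp (-((1/20)/r) * ((k:ℝ)*(πp+lam))) * mgf F P ((1/20)/r)
        ≤ Real.exp (-((1/20)/r) * ((k:ℝ)*(πp+lam))) *
            Real.exp ((k:ℝ) * (πp / r * (Real.exp ((1/20)/r*r) - 1))) :=
          mul_le_mul_of_nonneg_left (hmgf _) (Real.exp_pos _).le
      _ = Real.exp (((k:ℝ)/r) * (πp * (Real.exp (1/20) - 1 - 1/20) - (1/20)*lam)) := by
          rw [← Real.exp_add]
          congr 1
          rw [div_mul_cancel₀ _ hr.ne']
          field_simp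
          ring
      _ ≤ Real.exp (-L) := by
          apply Real.exp_le_exp.2
          have hkr : (0:ℝ) ≤ (k:ℝ)/r := by positivity
          have h2 : πp * (Real.exp (1/20) - 1 - 1/20) ≤ πp * (23/18000) :=
            mul_le_mul_of_nonneg_left mc_exp_s_bound hπ0
          nlinarith [hkey, mul_le_mul_of_nonneg_left h2 hkr]
  have hB : (P {ω | F ω ≤ (k:ℝ)*(πp-lam)}).toReal ≤ Real.exp (-L) := by
    have h1 := measure_le_le_exp_mul_mgf (μ := P) (X := F) (t := -((1/20)/r))
      ((k:ℝ)*(πp-lam)) (neg_nonpos.mpr (by positivity)) (hint _)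
    refine h1.trans ?_
    calc Real.exp (-(-((1/20)/r)) * ((k:ℝ)*(πp-lam))) * mgf F P (-((1/20)/r))
        ≤ Real.exp (-(-((1/20)/r)) * ((k:ℝ)*(πp-lam))) *
            Real.exp ((k:ℝ) * (πp / r * (Real.exp (-((1/20)/r)*r) - 1))) :=
          mul_le_mul_of_nonneg_left (hmgf _) (Real.exp_pos _).le
      _ = Real.exp (((k:ℝ)/r) * (πp * (Real.exp (-(1/20)) - 1 + 1/20) - (1/20)*lam)) := by
          rw [← Real.exp_add]
          congr 1
          rw [show -((1/20)/r)*r = -(1/20) by field_simp]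
          field_simp
          ring
      _ ≤ Real.exp (-L) := by
          apply Real.exp_le_exp.2
          have hkr : (0:ℝ) ≤ (k:ℝ)/r := by positivity
          have h2 : πp * (Real.exp (-(1/20)) - 1 + 1/20) ≤ πp * (23/18000) :=
            mul_le_mul_of_nonneg_left mc_exp_neg_s_bound hπ0
          nlinarith [hkey, mul_le_mul_of_nonneg_left h2 hkr]
  have hsub : {ω | lam ≤ |(∑ i, X i ω) / (k : ℝ) - πp|} ⊆
      {ω | (k:ℝ)*(πp+lam) ≤ F ω} ∪ {ω | F ω ≤ (k:ℝ)*(πp-lam)} := by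
    intro ω hω
    simp only [Set.mem_setOf_eq, Set.mem_union] at *
    rw [← hFapp] at hω
    rcases le_abs.mp hω with h | h
    · left
      have h2 : πp + lam ≤ F ω / k := by linarith
      have := (le_div_iff₀ hkR).mp h2
      linarith
    · right
      have h2 : F ω / k ≤ πp - lam := by linarith
      have := (div_le_iff₀ hkR).mp h2
      linarith
  calc P {ω | lam ≤ |(∑ i, X i ω) / (k : ℝ) - πp|}
      ≤ P ({ω | (k:ℝ)*(πp+lam) ≤ F ω} ∪ {ω | F ω ≤ (k:ℝ)*(πp-lam)}) := measure_mono hsub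
    _ ≤ P {ω | (k:ℝ)*(πp+lam) ≤ F ω} + P {ω | F ω ≤ (k:ℝ)*(πp-lam)} := measure_union_le _ _
    _ ≤ ENNReal.ofReal (Real.exp (-L)) + ENNReal.ofReal (Real.exp (-L)) := by
        gcongr
        · rw [← ENNReal.ofReal_toReal (measure_ne_top P _)]
          exact ENNReal.ofReal_le_ofReal hA
        · rw [← ENNReal.ofReal_toReal (measure_ne_top P _)]
          exact ENNReal.ofReal_le_ofReal hB
    _ = ENNReal.ofReal (2 * Real.exp (-L)) := by
        rw [← ENNReal.ofReal_add (Real.exp_pos _).le (Real.exp_pos _).le]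
        ring_nf

end Aux

theorem monte_carlo_concentration {Ω : Type*} {m0 : MeasurableSpace Ω}
    (P : Measure Ω) [IsProbabilityMeasure P]
    (α ε πp : ℝ) (i' n : ℕ)
    (hα0 : 0 < α) (hα1 : α < 1) (hε : 0 < ε) (hn : 1 ≤ n)
    (nr : ℕ) (hnr : nr = ⌈3200 * (1 - α) ^ i' * Real.log (40 * n) / ε⌉₊)
    (X : Fin nr → Ω → ℝ)
    (hmeas : ∀ i, Measurable (X i))
    (hindep : ProbabilityTheory.iIndepFun X P)
    (hbdd : ∀ i ω, 0 ≤ X i ω ∧ X i ω ≤ (1 - α) ^ i')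
    (hmean : ∀ i, (∫ ω, X i ω ∂P) = πp) :
    (ε / 2 ≤ πp →
      P {ω | πp / 20 ≤ |(∑ i, X i ω) / (nr : ℝ) - πp|} ≤
        ENNReal.ofReal (1 / (20 * n))) ∧
    (πp < ε / 2 →
      P {ω | ε / 20 ≤ |(∑ i, X i ω) / (nr : ℝ) - πp|} ≤
        ENNReal.ofReal (1 / (20 * n))) := by
  set r : ℝ := (1 - α) ^ i' with hrdef
  set L : ℝ := Real.log (40 * n) with hLdef
  have hr : 0 < r := pow_pos (by linarith) _
  have hnR : (1:ℝ) ≤ (n:ℝ) := by exact_mod_cast hn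
  have hL : 0 < L := Real.log_pos (by nlinarith)
  have hkpos : 0 < nr := by
    rw [hnr]
    exact Nat.ceil_pos.mpr (by positivity)
  have hπ0 : 0 ≤ πp := by
    rw [← hmean ⟨0, hkpos⟩]
    exact integral_nonneg fun ω => (hbdd _ ω).1
  have hnr' : 3200 * r * L / ε ≤ (nr:ℝ) := by
    rw [hnr]
    exact Nat.le_ceil _
  have hnrε : 3200 * r * L ≤ (nr:ℝ) * ε := by
    have := (div_le_iff₀ hε).mp hnr'
    linarith
  have hnrnn : (0:ℝ) ≤ (nr:ℝ) := Nat.cast_nonneg _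
  have hfinal : ENNReal.ofReal (2 * Real.exp (-L)) = ENNReal.ofReal (1 / (20 * n)) := by
    congr 1
    rw [hLdef, Real.exp_neg, Real.exp_log (by positivity)]
    field_simp
    ring
  constructor
  · intro hc
    have hkey : L ≤ ((nr:ℝ)/r) * ((πp/20)/20 - πp * (23/18000)) := by
      rw [div_mul_eq_mul_div, le_div_iff₀ hr]
      have h2 : (nr:ℝ) * ε ≤ (nr:ℝ) * (2 * πp) :=
        mul_le_mul_of_nonneg_left (by linarith) hnrnn
      nlinarith [hL.le, hr.le]
    rw [← hfinal]
    exact mc_bernstein_tail P hr hkpos X hmeas hindep hbdd hmean hπ0 hkey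
  · intro hc
    have hkey : L ≤ ((nr:ℝ)/r) * ((ε/20)/20 - πp * (23/18000)) := by
      rw [div_mul_eq_mul_div, le_div_iff₀ hr]
      have h2 : (nr:ℝ) * πp ≤ (nr:ℝ) * (ε/2) :=
        mul_le_mul_of_nonneg_left (by linarith) hnrnn
      nlinarith [hL.le, hr.le]
    rw [← hfinal]
    exact mc_bernstein_tail P hr hkpos X hmeas hindep hbdd hmean hπ0 hkey
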